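/- Let k ≥ 5 be an integer and c > (k+1)/(2k) a real number. For 1 ≤ j ≤ k, let (a_{0,j}, a_{1,j}) be non-increasing pairs of real numbers in [0,1] with a_{0,j} > 0 for every j, and assume ∑_{j=1}^{k} (a_{0,j} + a_{1,j}) > 2kc. Then there exist i_1, …, i_k ∈ {0,1} with i_1 + ⋯ + i_k ≥ 2 such that a_{i_1,1} + ⋯ + a_{i_k,k} > kc and a_{i_1,1} ⋯ a_{i_k,k} ≠ 0. -/

import Mathlib

lemma k_pairs_aux (k : ℕ) (c : ℝ) (a : Fin k → Fin 2 → ℝ)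
    (hpos : ∀ j, 0 < a j 0)
    (p q : Fin k) (hpq : p ≠ q) (hp1 : 0 < a p 1) (hq1 : 0 < a q 1)
    (hgt : (k : ℝ) * c < (∑ j, a j 0) - (a p 0 - a p 1) - (a q 0 - a q 1)) :
    ∃ i : Fin k → Fin 2, 2 ≤ ∑ j, ((i j : ℕ)) ∧
      (∑ j, a j (i j) > (k : ℝ) * c) ∧
      (∏ j, a j (i j) ≠ 0) := by
  classical
  refine ⟨fun j => if j = p ∨ j = q then 1 else 0, ?_, ?_, ?_⟩
  · have h1 : ∀ j : Fin k, (((if j = p ∨ j = q then (1 : Fin 2) else 0) : Fin 2) : ℕ)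
        = if j ∈ ({p, q} : Finset (Fin k)) then 1 else 0 := by
      intro j
      by_cases h : j = p ∨ j = q
      · rw [if_pos h, if_pos (by simpa using h)]; rfl
      · rw [if_neg h, if_neg (by simpa using h)]; rfl
    rw [Finset.sum_congr rfl fun j _ => h1 j, Finset.sum_ite_mem, Finset.univ_inter,
      Finset.sum_const, Finset.card_pair hpq]
    simp
  · have h1 : ∀ j : Fin k, a j (if j = p ∨ j = q then 1 else 0)
        = a j 0 + (if j ∈ ({p, q} : Finset (Fin k)) then a j 1 - a j 0 else 0) := by
      intro j
      by_cases h : j = p ∨ j = q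
      · rw [if_pos h, if_pos (by simpa using h)]; ring
      · rw [if_neg h, if_neg (by simpa using h)]; ring
    rw [Finset.sum_congr rfl fun j _ => h1 j, Finset.sum_add_distrib, Finset.sum_ite_mem,
      Finset.univ_inter, Finset.sum_pair hpq]
    linarith
  · have h2 : 0 < ∏ j, a j (if j = p ∨ j = q then 1 else 0) := by
      refine Finset.prod_pos fun j _ => ?_
      by_cases h : j = p ∨ j = q
      · rw [if_pos h]
        rcases h with rfl | rfl
        · exact hp1
        · exact hq1
      · rw [if_neg h]; exact hpos j
    exact h2.ne'

theorem k_pairs_base_case (k : ℕ) (hk : 5 ≤ k)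
    (c : ℝ) (hc : ((k : ℝ) + 1) / (2 * k) < c)
    (a : Fin k → Fin 2 → ℝ)
    (hmono : ∀ j, a j 1 ≤ a j 0)
    (hrange : ∀ j i, a j i ∈ Set.Icc (0 : ℝ) 1)
    (hpos : ∀ j, 0 < a j 0)
    (hsum : ∑ j, (a j 0 + a j 1) > 2 * k * c) :
    ∃ i : Fin k → Fin 2, 2 ≤ ∑ j, ((i j : ℕ)) ∧
      (∑ j, a j (i j) > (k : ℝ) * c) ∧
      (∏ j, a j (i j) ≠ 0) := by
  classical
  have hk5 : (5 : ℝ) ≤ (k : ℝ) := by exact_mod_cast hk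
  have hk0 : (0 : ℝ) < (k : ℝ) := by linarith
  have hkc : ((k : ℝ) + 1) / 2 < (k : ℝ) * c := by
    have h := mul_lt_mul_of_pos_left hc hk0
    have heq : (k : ℝ) * (((k : ℝ) + 1) / (2 * k)) = ((k : ℝ) + 1) / 2 := by
      field_simp
    linarith [heq ▸ h]
  have hkc3 : (3 : ℝ) ≤ (k : ℝ) * c := by linarith
  have ha1nonneg : ∀ j, 0 ≤ a j 1 := fun j => (hrange j 1).1
  have ha0le : ∀ j, a j 0 ≤ 1 := fun j => (hrange j 0).2
  have ha1le : ∀ j, a j 1 ≤ 1 := fun j => (hrange j 1).2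
  have hsplit : ∑ j, (a j 0 + a j 1) = (∑ j, a j 0) + ∑ j, a j 1 :=
    Finset.sum_add_distrib
  have hS0le : ∑ j, a j 0 ≤ (k : ℝ) := by
    have h := Finset.sum_le_sum (fun j (_ : j ∈ Finset.univ) => ha0le j)
    simpa using h
  have hS1gt1 : 1 < ∑ j, a j 1 := by linarith
  set P : Finset (Fin k) := Finset.univ.filter (fun j => 0 < a j 1) with hP
  have hmemP : ∀ j, j ∈ P ↔ 0 < a j 1 := by
    intro j; simp [hP]
  have hzero_off : ∀ j ∉ P, a j 1 = 0 := by
    intro j hj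
    have : ¬ 0 < a j 1 := fun h => hj ((hmemP j).mpr h)
    linarith [ha1nonneg j, not_lt.mp this]
  have hS1P : ∑ j, a j 1 = ∑ j ∈ P, a j 1 :=
    (Finset.sum_subset (Finset.subset_univ P) (fun j _ hj => hzero_off j hj)).symm
  have hcard2 : 2 ≤ P.card := by
    by_contra h
    push_neg at h
    have hb : ∑ j ∈ P, a j 1 ≤ (P.card : ℝ) := by
      have := Finset.sum_le_card_nsmul P (fun j => a j 1) 1 (fun j _ => ha1le j)
      simpa using this
    have hc1 : (P.card : ℝ) ≤ 1 := by
      have : P.card ≤ 1 := Nat.lt_succ_iff.mp h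
      exact_mod_cast this
    linarith [hS1P ▸ hS1gt1]
  by_cases hcase : P.card ≤ 3
  · -- small P: pick any two elements of P
    obtain ⟨p, hpP, q, hqP, hpq⟩ := Finset.one_lt_card.mp (by omega : 1 < P.card)
    have hsub : ({p, q} : Finset (Fin k)) ⊆ P := by
      intro j hj
      rcases Finset.mem_insert.mp hj with rfl | hj
      · exact hpP
      · exact (Finset.mem_singleton.mp hj) ▸ hqP
    have hsd : (∑ j ∈ P \ {p, q}, a j 1) + ∑ j ∈ ({p, q} : Finset (Fin k)), a j 1
        = ∑ j ∈ P, a j 1 := Finset.sum_sdiff hsub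
    have hpairsum : ∑ j ∈ ({p, q} : Finset (Fin k)), a j 1 = a p 1 + a q 1 :=
      Finset.sum_pair hpq
    have hRcard : (P \ {p, q}).card ≤ 1 := by
      have := Finset.card_sdiff_of_subset hsub
      rw [this, Finset.card_pair hpq]
      omega
    have hRle : ∑ j ∈ P \ {p, q}, a j 1 ≤ 1 := by
      have h1 := Finset.sum_le_card_nsmul (P \ {p, q}) (fun j => a j 1) 1
        (fun j _ => ha1le j)
      have h2 : ((P \ {p, q}).card : ℝ) ≤ 1 := by exact_mod_cast hRcard
      simp only [nsmul_eq_mul, mul_one] at h1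
      linarith
    refine k_pairs_aux k c a hpos p q hpq ((hmemP p).mp hpP) ((hmemP q).mp hqP) ?_
    have hp0 : a p 0 ≤ 1 := ha0le p
    have hq0 : a q 0 ≤ 1 := ha0le q
    -- S0 - (ap0 - ap1) - (aq0 - aq1) ≥ S0 + S1 - R - 2 > 2kc - 3 ≥ kc
    have hS1eq : ∑ j, a j 1 = (∑ j ∈ P \ {p, q}, a j 1) + (a p 1 + a q 1) := by
      rw [hS1P, ← hsd, hpairsum]
    linarith
  · -- large P: pick the two smallest gaps
    push_neg at hcase
    have hPne : P.Nonempty := Finset.card_pos.mp (by omega)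
    obtain ⟨p, hpP, hpmin⟩ := Finset.exists_min_image P (fun j => a j 0 - a j 1) hPne
    have hQne : (P.erase p).Nonempty := by
      rw [← Finset.card_pos, Finset.card_erase_of_mem hpP]
      omega
    obtain ⟨q, hqQ, hqmin⟩ := Finset.exists_min_image (P.erase p)
      (fun j => a j 0 - a j 1) hQne
    have hqP : q ∈ P := Finset.mem_of_mem_erase hqQ
    have hpq : p ≠ q := fun h => (Finset.ne_of_mem_erase hqQ) h.symm
    have hdpq : a p 0 - a p 1 ≤ a q 0 - a q 1 := hpmin q hqP
    have hsub : ({p, q} : Finset (Fin k)) ⊆ P := by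
      intro j hj
      rcases Finset.mem_insert.mp hj with rfl | hj
      · exact hpP
      · exact (Finset.mem_singleton.mp hj) ▸ hqP
    -- each j ∈ P \ {p,q} has gap ≥ gap q
    have hrest : ∀ j ∈ P \ {p, q}, a q 0 - a q 1 ≤ a j 0 - a j 1 := by
      intro j hj
      obtain ⟨hjP, hjn⟩ := Finset.mem_sdiff.mp hj
      have hjp : j ≠ p := by
        intro h; exact hjn (by simp [h])
      exact hqmin j (Finset.mem_erase.mpr ⟨hjp, hjP⟩)
    have hrestcard : 2 ≤ ((P \ {p, q}).card : ℝ) := by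
      have h1 := Finset.card_sdiff_of_subset hsub
      have : 2 ≤ (P \ {p, q}).card := by
        rw [h1, Finset.card_pair hpq]; omega
      exact_mod_cast this
    have hdq0 : 0 ≤ a q 0 - a q 1 := by linarith [hmono q]
    have hrestsum : ((P \ {p, q}).card : ℝ) * (a q 0 - a q 1)
        ≤ ∑ j ∈ P \ {p, q}, (a j 0 - a j 1) := by
      have := Finset.card_nsmul_le_sum (P \ {p, q}) (fun j => a j 0 - a j 1)
        (a q 0 - a q 1) hrest
      simpa [nsmul_eq_mul] using this
    have hrestge : 2 * (a q 0 - a q 1) ≤ ∑ j ∈ P \ {p, q}, (a j 0 - a j 1) := by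
      nlinarith
    have hsdd : (∑ j ∈ P \ {p, q}, (a j 0 - a j 1))
        + ∑ j ∈ ({p, q} : Finset (Fin k)), (a j 0 - a j 1)
        = ∑ j ∈ P, (a j 0 - a j 1) := Finset.sum_sdiff hsub
    have hpairsum : ∑ j ∈ ({p, q} : Finset (Fin k)), (a j 0 - a j 1)
        = (a p 0 - a p 1) + (a q 0 - a q 1) := Finset.sum_pair hpq
    have hPleD : ∑ j ∈ P, (a j 0 - a j 1) ≤ ∑ j, (a j 0 - a j 1) :=
      Finset.sum_le_sum_of_subset_of_nonneg (Finset.subset_univ P)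
        (fun j _ _ => by linarith [hmono j])
    have hDsplit : ∑ j, (a j 0 - a j 1) = (∑ j, a j 0) - ∑ j, a j 1 :=
      Finset.sum_sub_distrib (fun j => a j 0) (fun j => a j 1)
    refine k_pairs_aux k c a hpos p q hpq ((hmemP p).mp hpP) ((hmemP q).mp hqP) ?_
    linarith
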